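/- arXiv:2104.07542 — 6 statements merged into one kernel-verified Lean document; each statement's English description precedes it below -/
import Mathlib

section
/- Let u be a payoff with u12 > u11 > u13, u23 > u22 > u21, u31 > u33 > u32, and define μ1 = (u12-u11)/(u11-u13), μ2 = (u23-u22)/(u22-u21), μ3 = (u31-u33)/(u33-u32) (all positive). Then the system μ1*(1-p2) = p2*(1-p3), μ2*(1-p3) = p3*(1-p1), μ3*(1-p1) = p1*(1-p2) with 0 < pi < 1 for i = 1,2,3 implies μ1*μ2*μ3 < 1. -/
theorem stmt7 (u11 u12 u13 u21 u22 u23 u31 u32 u33 : ℝ)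
    (h1 : u12 > u11) (h2 : u11 > u13)
    (h3 : u23 > u22) (h4 : u22 > u21)
    (h5 : u31 > u33) (h6 : u33 > u32)
    (μ1 μ2 μ3 : ℝ)
    (hμ1 : μ1 = (u12 - u11) / (u11 - u13))
    (hμ2 : μ2 = (u23 - u22) / (u22 - u21))
    (hμ3 : μ3 = (u31 - u33) / (u33 - u32))
    (p1 p2 p3 : ℝ)
    (hp1 : 0 < p1) (hp1' : p1 < 1) (hp2 : 0 < p2) (hp2' : p2 < 1)
    (hp3 : 0 < p3) (hp3' : p3 < 1)
    (e1 : μ1 * (1 - p2) = p2 * (1 - p3))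
    (e2 : μ2 * (1 - p3) = p3 * (1 - p1))
    (e3 : μ3 * (1 - p1) = p1 * (1 - p2)) :
    μ1 * μ2 * μ3 < 1 := by
  have hne : (1 - p2) * (1 - p3) * (1 - p1) ≠ 0 := by
    have : (0:ℝ) < (1 - p2) * (1 - p3) * (1 - p1) :=
      mul_pos (mul_pos (by linarith) (by linarith)) (by linarith)
    exact ne_of_gt this
  have key : μ1 * μ2 * μ3 * ((1 - p2) * (1 - p3) * (1 - p1))
      = p1 * p2 * p3 * ((1 - p2) * (1 - p3) * (1 - p1)) := by
    linear_combination (μ2 * (1 - p3) * (μ3 * (1 - p1))) * e1 +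
      (p2 * (1 - p3) * (μ3 * (1 - p1))) * e2 +
      (p2 * (1 - p3) * (p3 * (1 - p1))) * e3
  have heq : μ1 * μ2 * μ3 = p1 * p2 * p3 := mul_right_cancel₀ hne key
  rw [heq]
  nlinarith [mul_pos hp1 hp2, mul_pos (mul_pos hp1 hp2) hp3, mul_pos hp2 hp3]
end

section
/- Let μ1, μ2, μ3 > 0 with μ1*μ2*μ3 < 1. Then p1 = μ3*(1 + μ1 + μ1*μ2)/(1 + μ3 + μ3*μ1), p2 = μ1*(1 + μ2 + μ2*μ3)/(1 + μ1 + μ1*μ2), p3 = μ2*(1 + μ3 + μ3*μ1)/(1 + μ2 + μ2*μ3) satisfy 0 < pi < 1 for each i and solve the system μ1*(1-p2) = p2*(1-p3), μ2*(1-p3) = p3*(1-p1), μ3*(1-p1) = p1*(1-p2). -/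
theorem stmt8 (μ1 μ2 μ3 : ℝ) (h1 : 0 < μ1) (h2 : 0 < μ2) (h3 : 0 < μ3)
    (h : μ1 * μ2 * μ3 < 1)
    (p1 p2 p3 : ℝ)
    (hp1 : p1 = μ3 * (1 + μ1 + μ1 * μ2) / (1 + μ3 + μ3 * μ1))
    (hp2 : p2 = μ1 * (1 + μ2 + μ2 * μ3) / (1 + μ1 + μ1 * μ2))
    (hp3 : p3 = μ2 * (1 + μ3 + μ3 * μ1) / (1 + μ2 + μ2 * μ3)) :
    (0 < p1 ∧ p1 < 1) ∧ (0 < p2 ∧ p2 < 1) ∧ (0 < p3 ∧ p3 < 1) ∧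
    μ1 * (1 - p2) = p2 * (1 - p3) ∧
    μ2 * (1 - p3) = p3 * (1 - p1) ∧
    μ3 * (1 - p1) = p1 * (1 - p2) := by
  have d1 : (0:ℝ) < 1 + μ3 + μ3 * μ1 := by positivity
  have d2 : (0:ℝ) < 1 + μ1 + μ1 * μ2 := by positivity
  have d3 : (0:ℝ) < 1 + μ2 + μ2 * μ3 := by positivity
  have hμ : μ3 * (μ1 * μ2) < 1 := by nlinarith
  refine ⟨⟨?_, ?_⟩, ⟨?_, ?_⟩, ⟨?_, ?_⟩, ?_, ?_, ?_⟩
  · rw [hp1]; positivity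
  · rw [hp1, div_lt_one d1]; nlinarith
  · rw [hp2]; positivity
  · rw [hp2, div_lt_one d2]; nlinarith
  · rw [hp3]; positivity
  · rw [hp3, div_lt_one d3]; nlinarith
  · rw [hp2, hp3]; field_simp; ring
  · rw [hp3, hp1]; field_simp; ring
  · rw [hp1, hp2]; field_simp; ring
end

section
/- Let μ1, μ2, μ3 > 0. The system μ1*(1-p2) = p2*(1-p3), μ2*(1-p3) = p3*(1-p1), μ3*(1-p1) = p1*(1-p2) has at most one solution (p1,p2,p3) with 0 < pi < 1 for all i, and any such solution is given by the explicit formulas p1 = μ3*(1+μ1+μ1*μ2)/(1+μ3+μ3*μ1), p2 = μ1*(1+μ2+μ2*μ3)/(1+μ1+μ1*μ2), p3 = μ2*(1+μ3+μ3*μ1)/(1+μ2+μ2*μ3). -/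
lemma stmt9_key (a b c x y z : ℝ) (ha : 0 < a) (hc : 0 < c) (hx1 : x < 1)
    (e1 : a * (1 - y) = y * (1 - z)) (e2 : b * (1 - z) = z * (1 - x))
    (e3 : c * (1 - x) = x * (1 - y)) :
    x = c * (1 + a + a * b) / (1 + c + c * a) := by
  have hden : (0:ℝ) < 1 + c + c * a := by positivity
  have hfac : (x - 1) * ((1 + c + c * a) * x - c * (1 + a + a * b)) = 0 := by
    linear_combination (1 + b - x) * x * e1 + ((1 + c) * x - c) * e2 +
      (1 + b - x) * (1 + a - z) * e3
  rcases mul_eq_zero.mp hfac with h | h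
  · linarith
  · field_simp
    linarith

theorem stmt9 (μ1 μ2 μ3 : ℝ) (h1 : 0 < μ1) (h2 : 0 < μ2) (h3 : 0 < μ3) :
    ∀ p1 p2 p3 : ℝ,
      0 < p1 → p1 < 1 → 0 < p2 → p2 < 1 → 0 < p3 → p3 < 1 →
      μ1 * (1 - p2) = p2 * (1 - p3) →
      μ2 * (1 - p3) = p3 * (1 - p1) →
      μ3 * (1 - p1) = p1 * (1 - p2) →
      p1 = μ3 * (1 + μ1 + μ1 * μ2) / (1 + μ3 + μ3 * μ1) ∧
      p2 = μ1 * (1 + μ2 + μ2 * μ3) / (1 + μ1 + μ1 * μ2) ∧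
      p3 = μ2 * (1 + μ3 + μ3 * μ1) / (1 + μ2 + μ2 * μ3) := by
  intro p1 p2 p3 _ hp1 _ hp2 _ hp3 e1 e2 e3
  exact ⟨stmt9_key μ1 μ2 μ3 p1 p2 p3 h1 h3 hp1 e1 e2 e3,
    stmt9_key μ2 μ3 μ1 p2 p3 p1 h2 h1 hp2 e2 e3 e1,
    stmt9_key μ3 μ1 μ2 p3 p1 p2 h3 h2 hp3 e3 e1 e2⟩
end

section
/- Let each of 3 players have strategy set {t,f}, and let the outcome map o : {t,f}^3 → {a1,a2,a3,c} × {initial position} be given by the 3-cycle structure: from initial position vi the outcome is a_j where j is the first index (in cyclic order i, i+1, i+2) with strategy t, and c if all play f. Let payoffs satisfy u12 > u11 > u13 > u1c, u23 > u22 > u21 > u2c, u31 > u33 > u32 > u3c. Then no strategy profile s ∈ {t,f}^3 is a Nash equilibrium simultaneously for all three initial positions v1, v2, v3. -/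
/-- Outcome of the 3-cycle game from initial position `i`:
`some j` means termination at terminal `a_j`, `none` means the cycle `c`.
`s j = true` means player `j` terminates (`t`), `false` means follow the cycle (`f`). -/
def G3outcome (s : Fin 3 → Bool) (i : Fin 3) : Option (Fin 3) :=
  if s i then some i
  else if s (i + 1) then some (i + 1)
  else if s (i + 2) then some (i + 2)
  else none

theorem stmt15 (u : Fin 3 → Option (Fin 3) → ℝ)
    (hU : ∀ j : Fin 3,
      u j (some (j + 1)) > u j (some j) ∧
      u j (some j) > u j (some (j + 2)) ∧
      u j (some (j + 2)) > u j none) :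
    ¬ ∃ s : Fin 3 → Bool, ∀ i : Fin 3,
      ∀ j : Fin 3, ∀ b : Bool,
        u j (G3outcome (Function.update s j b) i) ≤ u j (G3outcome s i) := by
  rintro ⟨s, h⟩
  obtain ⟨h0a, h0b, h0c⟩ := hU 0
  obtain ⟨h1a, h1b, h1c⟩ := hU 1
  obtain ⟨h2a, h2b, h2c⟩ := hU 2
  simp only [Fin.reduceAdd, Fin.isValue] at h0a h0b h0c h1a h1b h1c h2a h2b h2c
  cases hs0 : s 0 <;> cases hs1 : s 1 <;> cases hs2 : s 2
  · -- FFF : i=0 j=0 b=true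
    have := h 0 0 true
    simp [G3outcome, Function.update, hs0, hs1, hs2, Fin.reduceAdd] at this
    linarith
  · -- FFT : i=0 j=0 b=true
    have := h 0 0 true
    simp [G3outcome, Function.update, hs0, hs1, hs2, Fin.reduceAdd] at this
    linarith
  · -- FTF : i=2 j=2 b=true
    have := h 2 2 true
    simp [G3outcome, Function.update, hs0, hs1, hs2, Fin.reduceAdd] at this
    linarith
  · -- FTT : i=1 j=1 b=false
    have := h 1 1 false
    simp [G3outcome, Function.update, hs0, hs1, hs2, Fin.reduceAdd] at this
    linarith
  · -- TFF : i=1 j=1 b=true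
    have := h 1 1 true
    simp [G3outcome, Function.update, hs0, hs1, hs2, Fin.reduceAdd] at this
    linarith
  · -- TFT : i=2 j=2 b=false
    have := h 2 2 false
    simp [G3outcome, Function.update, hs0, hs1, hs2, Fin.reduceAdd] at this
    linarith
  · -- TTF : i=0 j=0 b=false
    have := h 0 0 false
    simp [G3outcome, Function.update, hs0, hs1, hs2, Fin.reduceAdd] at this
    linarith
  · -- TTT : i=0 j=0 b=false
    have := h 0 0 false
    simp [G3outcome, Function.update, hs0, hs1, hs2, Fin.reduceAdd] at this
    linarith
end

section
/- Let μ1, μ2, μ3 > 0 and suppose (p1,p2,p3) ∈ [0,1]^3 solves μ1*(1-p2) = p2*(1-p3), μ2*(1-p3) = p3*(1-p1), μ3*(1-p1) = p1*(1-p2). If pi = 1 for some i, then p1 = p2 = p3 = 1. If pi = 0 for some i, then the system forces a contradiction unless another pj ∈ {0,1}; in particular a solution with all 0 < pi < 1 exists iff μ1*μ2*μ3 < 1. -/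
theorem stmt17 (μ1 μ2 μ3 : ℝ) (h1 : 0 < μ1) (h2 : 0 < μ2) (h3 : 0 < μ3) :
    (∀ p1 p2 p3 : ℝ,
      p1 ∈ Set.Icc (0:ℝ) 1 → p2 ∈ Set.Icc (0:ℝ) 1 → p3 ∈ Set.Icc (0:ℝ) 1 →
      μ1 * (1 - p2) = p2 * (1 - p3) →
      μ2 * (1 - p3) = p3 * (1 - p1) →
      μ3 * (1 - p1) = p1 * (1 - p2) →
      ((p1 = 1 ∨ p2 = 1 ∨ p3 = 1) → p1 = 1 ∧ p2 = 1 ∧ p3 = 1) ∧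
      ((p1 = 0 ∨ p2 = 0 ∨ p3 = 0) → False)) ∧
    ((∃ p1 p2 p3 : ℝ,
        0 < p1 ∧ p1 < 1 ∧ 0 < p2 ∧ p2 < 1 ∧ 0 < p3 ∧ p3 < 1 ∧
        μ1 * (1 - p2) = p2 * (1 - p3) ∧
        μ2 * (1 - p3) = p3 * (1 - p1) ∧
        μ3 * (1 - p1) = p1 * (1 - p2)) ↔ μ1 * μ2 * μ3 < 1) := by
  constructor
  · intro p1 p2 p3 hp1 hp2 hp3 e1 e2 e3
    constructor
    · rintro (rfl | rfl | rfl)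
      · have h2' : p2 = 1 := by nlinarith
        subst h2'
        have h3' : p3 = 1 := by nlinarith
        exact ⟨rfl, rfl, h3'⟩
      · have h3' : p3 = 1 := by nlinarith
        subst h3'
        have h1' : p1 = 1 := by nlinarith
        exact ⟨h1', rfl, rfl⟩
      · have h1' : p1 = 1 := by nlinarith
        subst h1'
        have h2' : p2 = 1 := by nlinarith
        exact ⟨rfl, h2', rfl⟩
    · rintro (rfl | rfl | rfl)
      · nlinarith
      · nlinarith
      · nlinarith
  · constructor
    · rintro ⟨p1, p2, p3, q1, l1, q2, l2, q3, l3, e1, e2, e3⟩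
      have key : μ1 * μ2 * μ3 = p1 * p2 * p3 := by
        have hne : (1 - p1) * (1 - p2) * (1 - p3) ≠ 0 :=
          ne_of_gt (mul_pos (mul_pos (by linarith) (by linarith)) (by linarith))
        have hprod : μ1 * (1 - p2) * (μ2 * (1 - p3)) * (μ3 * (1 - p1))
            = p2 * (1 - p3) * (p3 * (1 - p1)) * (p1 * (1 - p2)) := by
          rw [e1, e2, e3]
        have : (μ1 * μ2 * μ3) * ((1 - p1) * (1 - p2) * (1 - p3))
            = (p1 * p2 * p3) * ((1 - p1) * (1 - p2) * (1 - p3)) := by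
          linear_combination hprod
        exact mul_right_cancel₀ hne this
      rw [key]
      have h12 : p1 * p2 < 1 := by nlinarith
      nlinarith
    · intro hlt
      set d1 : ℝ := 1 + μ3 + μ3 * μ1 with hd1
      set d2 : ℝ := 1 + μ1 + μ1 * μ2 with hd2
      set d3 : ℝ := 1 + μ2 + μ2 * μ3 with hd3
      have hd1p : 0 < d1 := by positivity
      have hd2p : 0 < d2 := by positivity
      have hd3p : 0 < d3 := by positivity
      refine ⟨μ3 * (μ1 * μ2 + μ1 + 1) / d1, μ1 * (μ2 * μ3 + μ2 + 1) / d2,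
        μ2 * (μ3 * μ1 + μ3 + 1) / d3, ?_, ?_, ?_, ?_, ?_, ?_, ?_, ?_, ?_⟩
      · positivity
      · rw [div_lt_one hd1p]; nlinarith
      · positivity
      · rw [div_lt_one hd2p]; nlinarith
      · positivity
      · rw [div_lt_one hd3p]; nlinarith
      · field_simp
        ring
      · field_simp
        ring
      · field_simp
        ring
end

section
/- Let u(a1), u(a2), u(c) be reals with (u(a2) + u(c))/2 > u(a1) > u(c). Under the a priori realization of the game structure G1 (chance position v0 moving to a2 or v1 with probability 1/2 each; player position v1 with moves to a1 or v0), the player's pure strategy maximizing the expected payoff when starting at v1 is the move (v1, v0) (giving payoff (u(a2)+u(c))/2), while the pure strategy maximizing the expected payoff when starting at v0 is (v1, a1) (giving payoff (u(a2)+u(a1))/2 > (u(a2)+u(c))/2 restricted to the v0-start comparison). Hence no pure strategy is simultaneously optimal for both initial positions. -/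
/-- `true` encodes the move `(v1, v0)` (follow the cycle), `false` the move `(v1, a1)`. -/
theorem stmt19 (ua1 ua2 uc : ℝ)
    (h1 : (ua2 + uc) / 2 > ua1) (h2 : ua1 > uc)
    (Ev1 Ev0 : Bool → ℝ)
    (hEv1 : ∀ b, Ev1 b = if b then (ua2 + uc) / 2 else ua1)
    (hEv0 : ∀ b, Ev0 b = if b then (ua2 + uc) / 2 else (ua2 + ua1) / 2) :
    Ev1 true > Ev1 false ∧ Ev0 false > Ev0 true ∧
    ¬ ∃ b : Bool, (∀ b', Ev1 b' ≤ Ev1 b) ∧ (∀ b', Ev0 b' ≤ Ev0 b) := by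
  simp only [hEv1, hEv0]
  refine ⟨by simpa using h1, by simp; linarith, ?_⟩
  rintro ⟨b, hb1, hb0⟩
  cases b
  · have := hb1 true; simp at this; linarith
  · have := hb0 false; simp at this; linarith
end
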